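/- If an operation 𝓘 measures an atomic effect a (a rank-one projection), then for every effect b there exists λ ∈ [0,1] with 𝓘*(b) = λ·a. -/

import Mathlib

open scoped ComplexOrder

open Matrix BigOperators

/-- An effect on a finite-dimensional Hilbert space: `0 ≤ a ≤ I`. -/
def IsEffect {n : ℕ} (a : Matrix (Fin n) (Fin n) ℂ) : Prop :=
  a.PosSemidef ∧ (1 - a).PosSemidef

/-- An atomic effect: a rank-one (orthogonal) projection. -/
def IsAtomicEffect {n : ℕ} (a : Matrix (Fin n) (Fin n) ℂ) : Prop :=
  a.IsHermitian ∧ a * a = a ∧ a.rank = 1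

/-- The dual of the operation with Kraus operators `K i`. -/
noncomputable def KrausDual {n m : ℕ} (K : Fin m → Matrix (Fin n) (Fin n) ℂ)
    (A : Matrix (Fin n) (Fin n) ℂ) : Matrix (Fin n) (Fin n) ℂ :=
  ∑ i, (K i)ᴴ * A * K i

lemma krausDual_psd {n m : ℕ} (K : Fin m → Matrix (Fin n) (Fin n) ℂ)
    {b : Matrix (Fin n) (Fin n) ℂ} (hb : b.PosSemidef) : (KrausDual K b).PosSemidef :=
  Finset.sum_induction _ _ (fun _ _ hx hy => hx.add hy) Matrix.PosSemidef.zero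
    (fun _ _ => hb.conjTranspose_mul_mul_same _)

lemma krausDual_sub {n m : ℕ} (K : Fin m → Matrix (Fin n) (Fin n) ℂ)
    (x y : Matrix (Fin n) (Fin n) ℂ) :
    KrausDual K (x - y) = KrausDual K x - KrausDual K y := by
  simp [KrausDual, mul_sub, sub_mul, Finset.sum_sub_distrib]


/-- if an operation (Kraus operators `K`, `∑ Kᵢ*Kᵢ ≤ I`) measures an
atomic effect `a`, then for every effect `b` there is `λ ∈ [0,1]` with `𝓘*(b) = λ a`. -/
theorem dual_eq_smul_of_measures_atomic {n m : ℕ}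
    (K : Fin m → Matrix (Fin n) (Fin n) ℂ)
    (hK : (1 - ∑ i, (K i)ᴴ * K i).PosSemidef)
    (a : Matrix (Fin n) (Fin n) ℂ) (ha : IsEffect a) (hatom : IsAtomicEffect a)
    (hmeas : KrausDual K 1 = a) :
    ∀ b : Matrix (Fin n) (Fin n) ℂ, IsEffect b →
      ∃ lam : ℝ, lam ∈ Set.Icc (0 : ℝ) 1 ∧ KrausDual K b = (lam : ℂ) • a := by
  obtain ⟨hherm, hidem, hrank⟩ := hatom
  intro b hb
  set c := KrausDual K b with hc_def
  have hc : c.PosSemidef := krausDual_psd K hb.1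
  have hac : (a - c).PosSemidef := by
    have h := krausDual_psd K hb.2
    rwa [krausDual_sub, hmeas] at h
  -- extract spanning vector u of range of a
  have hr : Module.finrank ℂ (LinearMap.range a.mulVecLin) = 1 := hrank
  obtain ⟨v, hv0, hvspan⟩ := finrank_eq_one_iff'.mp hr
  set u : Fin n → ℂ := (v : Fin n → ℂ) with hu_def
  have hu0 : u ≠ 0 := by
    simpa [hu_def, Submodule.coe_eq_zero] using hv0
  have hau : a *ᵥ u = u := by
    obtain ⟨w, hw⟩ := v.2
    rw [mulVecLin_apply] at hw
    calc a *ᵥ u = a *ᵥ (a *ᵥ w) := by rw [hw]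
    _ = (a * a) *ᵥ w := by rw [mulVec_mulVec]
    _ = u := by rw [hidem, hw]
  -- norm of u
  set Nr : ℝ := ∑ i, Complex.normSq (u i) with hNr_def
  have hN : star u ⬝ᵥ u = (Nr : ℂ) := by
    simp [dotProduct, hNr_def, Complex.normSq_eq_conj_mul_self]
  have hNr_pos : 0 < Nr := by
    obtain ⟨i, hi⟩ := Function.ne_iff.mp hu0
    exact Finset.sum_pos' (fun j _ => Complex.normSq_nonneg _)
      ⟨i, Finset.mem_univ i, by simpa using Complex.normSq_pos.mpr hi⟩
  have hNrC : (Nr : ℂ) ≠ 0 := by exact_mod_cast hNr_pos.ne'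
  -- key: a acts as rank-one projection onto u
  have key : ∀ x, a *ᵥ x = ((star u ⬝ᵥ x) / Nr) • u := by
    intro x
    have hmem : a *ᵥ x ∈ LinearMap.range a.mulVecLin := ⟨x, by rw [mulVecLin_apply]⟩
    obtain ⟨cc, hcc⟩ := hvspan ⟨a *ᵥ x, hmem⟩
    have hcc' : cc • u = a *ᵥ x := congrArg Subtype.val hcc
    have h2 : star u ⬝ᵥ (a *ᵥ x) = star u ⬝ᵥ x := by
      rw [dotProduct_mulVec]
      congr 1
      have : star (aᴴ *ᵥ u) = star u ᵥ* a := by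
        rw [star_mulVec, conjTranspose_conjTranspose]
      rw [← this, hherm.eq, hau]
    have h1 : star u ⬝ᵥ (a *ᵥ x) = cc * Nr := by
      rw [← hcc', dotProduct_smul, hN, smul_eq_mul]
    have hcval : cc = (star u ⬝ᵥ x) / Nr := by
      field_simp
      rw [← h1, h2]
    rw [← hcc', hcval]
  -- kernel of a is killed by c
  have ker : ∀ x, a *ᵥ x = 0 → c *ᵥ x = 0 := by
    intro x hx
    have h1 : 0 ≤ star x ⬝ᵥ (c *ᵥ x) := hc.dotProduct_mulVec_nonneg x
    have h2 : 0 ≤ star x ⬝ᵥ ((a - c) *ᵥ x) := hac.dotProduct_mulVec_nonneg x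
    rw [sub_mulVec, hx, dotProduct_sub, dotProduct_zero, zero_sub] at h2
    have : star x ⬝ᵥ (c *ᵥ x) = 0 := le_antisymm (neg_nonneg.mp h2) h1
    exact (hc.dotProduct_mulVec_zero_iff x).mp this
  -- c = c * a
  have hfix : ∀ x, c *ᵥ (a *ᵥ x) = c *ᵥ x := by
    intro x
    have h0 : a *ᵥ (x - a *ᵥ x) = 0 := by
      rw [mulVec_sub, mulVec_mulVec, hidem, sub_self]
    have h1 := ker _ h0
    rw [mulVec_sub, sub_eq_zero] at h1
    exact h1.symm
  have hca : c * a = c := by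
    ext i j
    have h := hfix (Pi.single j 1)
    rw [mulVec_mulVec] at h
    have := congrFun h i
    simpa [mulVec_single] using this
  have hacm : a * c = c := by
    have h : (c * a)ᴴ = cᴴ := congrArg conjTranspose hca
    rwa [conjTranspose_mul, hherm.eq, hc.1.eq] at h
  set μ : ℂ := star u ⬝ᵥ (c *ᵥ u) with hμ_def
  have hcu : c *ᵥ u = (μ / Nr) • u := by
    have h : a *ᵥ (c *ᵥ u) = c *ᵥ u := by rw [mulVec_mulVec, hacm]
    rw [← h, key (c *ᵥ u)]
  have hcx : ∀ x, c *ᵥ x = (μ / Nr) • (a *ᵥ x) := by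
    intro x
    rw [← hfix x, key x, mulVec_smul, hcu]
    exact smul_comm _ _ _
  have hfinal : c = (μ / Nr) • a := by
    ext i j
    have h := hcx (Pi.single j 1)
    have := congrFun h i
    simpa [mulVec_single, smul_mulVec] using this
  -- bounds on μ
  have hμ0 : 0 ≤ μ := hc.dotProduct_mulVec_nonneg u
  have hμN : μ ≤ (Nr : ℂ) := by
    have h := hac.dotProduct_mulVec_nonneg u
    rw [sub_mulVec, hau, dotProduct_sub, hN] at h
    exact sub_nonneg.mp h
  have him : μ.im = 0 := ((Complex.nonneg_iff).mp hμ0).2.symm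
  have hre0 : 0 ≤ μ.re := ((Complex.nonneg_iff).mp hμ0).1
  have hreN : μ.re ≤ Nr := by
    have := (Complex.le_def.mp hμN).1
    simpa using this
  refine ⟨μ.re / Nr, ⟨div_nonneg hre0 hNr_pos.le, (div_le_one hNr_pos).mpr hreN⟩, ?_⟩
  rw [hfinal]
  congr 1
  rw [Complex.ofReal_div]
  congr 1
  exact Complex.ext (by simp) (by simp [him])
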